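/- Let D^n, D : ℝ^d → [0,∞) be depth functions (upper semicontinuous, vanishing at infinity, superlevel sets starshaped and compact for α > 0), with D nonconstant (attaining a positive value). If D^n converges to D uniformly on every compact subset of ℝ^d, then D^n converges to D uniformly on all of ℝ^d. -/
import Mathlib


open Filter Metric Set Topology

/-- For depth functions (usc, vanishing at infinity, compact starshaped superlevel sets)
with `D` nonconstant, uniform convergence on compact sets implies uniform convergence
on all of `ℝ^d`. -/
theorem compact_convergence_implies_uniform_convergence {d : ℕ}
    (Dn : ℕ → EuclideanSpace ℝ (Fin d) → ℝ) (D : EuclideanSpace ℝ (Fin d) → ℝ)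
    (hDn_nn : ∀ n z, 0 ≤ Dn n z) (hD_nn : ∀ z, 0 ≤ D z)
    (hDn_usc : ∀ n, UpperSemicontinuous (Dn n)) (hD_usc : UpperSemicontinuous D)
    (hDn_van : ∀ n, Tendsto (Dn n) (cocompact (EuclideanSpace ℝ (Fin d))) (nhds 0))
    (hD_van : Tendsto D (cocompact (EuclideanSpace ℝ (Fin d))) (nhds 0))
    (hDn_star : ∀ n, ∀ α : ℝ, 0 < α → {z | α ≤ Dn n z}.Nonempty →
      ∃ x ∈ {z | α ≤ Dn n z}, StarConvex ℝ x {z | α ≤ Dn n z})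
    (hD_star : ∀ α : ℝ, 0 < α → {z | α ≤ D z}.Nonempty →
      ∃ x ∈ {z | α ≤ D z}, StarConvex ℝ x {z | α ≤ D z})
    (hpos : ∃ x, 0 < D x)
    (hcpt : ∀ K : Set (EuclideanSpace ℝ (Fin d)), IsCompact K →
      TendstoUniformlyOn (fun n => Dn n) D atTop K) :
    TendstoUniformly (fun n => Dn n) D atTop := by
  obtain ⟨x0, hx0⟩ := hpos
  rw [Metric.tendstoUniformly_iff]
  intro ε hε
  set α := min ε (D x0) / 2 with hα_def
  have hα : 0 < α := by
    have := lt_min hε hx0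
    positivity
  have hαε : α ≤ ε / 2 := by
    have := min_le_left ε (D x0); rw [hα_def]; linarith
  have hαc : α ≤ D x0 / 2 := by
    have := min_le_right ε (D x0); rw [hα_def]; linarith
  have hev : D ⁻¹' Iio (α / 2) ∈ cocompact (EuclideanSpace ℝ (Fin d)) :=
    hD_van (Iio_mem_nhds (half_pos hα))
  obtain ⟨K, hK, hKsub⟩ := mem_cocompact.mp hev
  obtain ⟨r0, hr0⟩ := hK.isBounded.subset_closedBall 0
  set r := max r0 ‖x0‖ + 1 with hr_def
  have hKball : K ⊆ ball 0 r := fun w hw => by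
    have := hr0 hw
    rw [mem_closedBall_zero_iff] at this
    rw [mem_ball_zero_iff]
    have h1 : r0 ≤ max r0 ‖x0‖ := le_max_left _ _
    linarith
  have hx0ball : ‖x0‖ < r := by
    have : ‖x0‖ ≤ max r0 ‖x0‖ := le_max_right _ _
    linarith
  have hDsmall : ∀ w, w ∉ ball (0 : EuclideanSpace ℝ (Fin d)) r → D w < α / 2 :=
    fun w hw => hKsub (fun hwK => hw (hKball hwK))
  have hun := (Metric.tendstoUniformlyOn_iff.mp
    (hcpt (closedBall 0 r) (isCompact_closedBall 0 r))) (α / 2) (half_pos hα)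
  filter_upwards [hun] with n hn
  intro z
  have hclose : ∀ w ∈ closedBall (0 : EuclideanSpace ℝ (Fin d)) r,
      |D w - Dn n w| < α / 2 := fun w hw => by
    have := hn w hw; rwa [Real.dist_eq] at this
  by_cases hz : z ∈ closedBall (0 : EuclideanSpace ℝ (Fin d)) r
  · have := hclose z hz
    rw [Real.dist_eq]
    calc |D z - Dn n z| < α / 2 := this
      _ < ε := by linarith
  · have hDz : D z < α / 2 := hDsmall z (fun h => hz (ball_subset_closedBall h))
    have hDnz : Dn n z < α := by
      by_contra h
      push_neg at h
      -- x0 is in the superlevel set of Dn n at level α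
      have hx0cb : x0 ∈ closedBall (0 : EuclideanSpace ℝ (Fin d)) r := by
        rw [mem_closedBall_zero_iff]; linarith
      have hx0S : α ≤ Dn n x0 := by
        have h1 := abs_lt.mp (hclose x0 hx0cb)
        linarith [h1.1, h1.2]
      obtain ⟨x, hxS, hstar⟩ := hDn_star n α hα ⟨z, h⟩
      have hseg1 : segment ℝ x x0 ⊆ {w | α ≤ Dn n w} := hstar.segment_subset hx0S
      have hseg2 : segment ℝ x z ⊆ {w | α ≤ Dn n w} := hstar.segment_subset h
      have hconn : IsPreconnected (segment ℝ x x0 ∪ segment ℝ x z) :=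
        IsPreconnected.union x (left_mem_segment ℝ x x0) (left_mem_segment ℝ x z)
          (convex_segment x x0).isPreconnected (convex_segment x z).isPreconnected
      have hivt := hconn.intermediate_value
        (Set.mem_union_left _ (right_mem_segment ℝ x x0))
        (Set.mem_union_right _ (right_mem_segment ℝ x z))
        (continuous_norm.continuousOn (s := segment ℝ x x0 ∪ segment ℝ x z))
      have hzr : r < ‖z‖ := by
        rw [mem_closedBall_zero_iff] at hz; push_neg at hz; exact hz
      have hrmem : r ∈ Icc ‖x0‖ ‖z‖ := ⟨le_of_lt hx0ball, le_of_lt hzr⟩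
      obtain ⟨w, hwT, hwnorm⟩ := hivt hrmem
      change ‖w‖ = r at hwnorm
      have hwS : α ≤ Dn n w := by
        rcases hwT with hw1 | hw2
        · exact hseg1 hw1
        · exact hseg2 hw2
      have hwcb : w ∈ closedBall (0 : EuclideanSpace ℝ (Fin d)) r := by
        rw [mem_closedBall_zero_iff, hwnorm]
      have hwD : D w < α / 2 := hDsmall w (by
        rw [mem_ball_zero_iff, hwnorm]; exact lt_irrefl r)
      have h1 := abs_lt.mp (hclose w hwcb)
      linarith [h1.1, h1.2]
    rw [Real.dist_eq, abs_lt]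
    constructor
    · have := hD_nn z; linarith
    · have := hDn_nn n z; linarith
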